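/- Let d_1 = 2n_1 and d_2 = 2n_2 be even numbers, d = 2n = d_1+d_2, and let λ_1, λ_2 be special orthogonal partitions of d_1 and d_2. Then W = W(λ_1,λ_2) (type D data) is an orthogonal partition of d and D_o(W) = D_o(λ_1) + D_o(λ_2) + n(2n−1) − n_1(2n_1−1) − n_2(2n_2−1). -/

import Mathlib

/-- `f` is a partition of `d`: weakly decreasing, finitely many nonzero terms, total sum `d`.
    Indexing is 0-based: `f j` is the `(j+1)`-st part. -/
def IsPartitionOf (f : ℕ → ℕ) (d : ℕ) : Prop :=
  Antitone f ∧ ∃ N, (∀ j, N ≤ j → f j = 0) ∧ ∑ j ∈ Finset.range N, f j = d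

/-- Transpose of a partition (0-based): `ptrans f k` = #{j : f j ≥ k+1}, i.e. `(f^t)_{k+1}`. -/
noncomputable def ptrans (f : ℕ → ℕ) : ℕ → ℕ := fun k => Nat.card {j : ℕ // k + 1 ≤ f j}

/-- Multiplicity of the part `k` in `f` (meaningful for `k > 0`). -/
noncomputable def pmult (f : ℕ → ℕ) (k : ℕ) : ℕ := Nat.card {j : ℕ // f j = k}

/-- Orthogonal: every even positive part occurs with even multiplicity. -/
def IsOrthogonal (f : ℕ → ℕ) : Prop := ∀ k, 0 < k → Even k → Even (pmult f k)

/-- Symplectic: every odd positive part occurs with even multiplicity. -/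
def IsSymplectic (f : ℕ → ℕ) : Prop := ∀ k, 0 < k → Odd k → Even (pmult f k)

/-- Dominance order for ℕ-valued sequences. -/
def NDomLE (f g : ℕ → ℕ) : Prop :=
  ∀ N, ∑ j ∈ Finset.range N, f j ≤ ∑ j ∈ Finset.range N, g j

/-- Dominance order for ℤ-valued sequences. -/
def DomLE (f g : ℕ → ℤ) : Prop :=
  ∀ N, ∑ j ∈ Finset.range N, f j ≤ ∑ j ∈ Finset.range N, g j

/-- `ν` is the `P`-collapse of `μ` (both of total size `m`): `ν` is a partition of `m`
    satisfying `P`, `ν ≤ μ`, and every partition `σ` of `m` satisfying `P` with `σ ≤ μ`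
    satisfies `σ ≤ ν`. -/
def IsCollapse (P : (ℕ → ℕ) → Prop) (m : ℕ) (μ ν : ℕ → ℕ) : Prop :=
  IsPartitionOf ν m ∧ P ν ∧ NDomLE ν μ ∧
    ∀ σ, IsPartitionOf σ m → P σ → NDomLE σ μ → NDomLE σ ν

/-- B-collapse (largest orthogonal partition below `μ`, `m` odd). -/
def IsBCollapse : ℕ → (ℕ → ℕ) → (ℕ → ℕ) → Prop := IsCollapse IsOrthogonal
/-- C-collapse (largest symplectic partition below `μ`, `m` even). -/
def IsCCollapse : ℕ → (ℕ → ℕ) → (ℕ → ℕ) → Prop := IsCollapse IsSymplectic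
/-- D-collapse (largest orthogonal partition below `μ`, `m` even). -/
def IsDCollapse : ℕ → (ℕ → ℕ) → (ℕ → ℕ) → Prop := IsCollapse IsOrthogonal

/-- `μ^−` : decrease the smallest nonzero part by 1. -/
def minusOne (f : ℕ → ℕ) : ℕ → ℕ :=
  fun j => if 0 < f j ∧ f (j+1) = 0 then f j - 1 else f j

/-- `μ^+` : increase the largest part by 1. -/
def plusOne (f : ℕ → ℕ) : ℕ → ℕ := fun j => if j = 0 then f 0 + 1 else f j

/-- `u = f ∪ g` : `u` is weakly decreasing, finitely supported, and every positive
    part occurs in `u` with multiplicity the sum of its multiplicities in `f` and `g`. -/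
def IsUnionOf (u f g : ℕ → ℕ) : Prop :=
  Antitone u ∧ (∃ N, ∀ j, N ≤ j → u j = 0) ∧
    ∀ k, 0 < k → pmult u k = pmult f k + pmult g k

/-- The sequence ξ attached to `(f, g, ε₁, ε₂, d)`.  Index `j` here corresponds to the
    1-based index `j+1` of the paper. -/
def xiSeq (f g : ℕ → ℕ) (e1 e2 d : ℕ) : ℕ → ℤ := fun j =>
  if (j + 1) % 2 = (d + 1) % 2 ∧ f j % 2 = e1 ∧ g j % 2 = e2 ∧
      (j = 0 ∨ f j + g j < f (j - 1) + g (j - 1)) then 1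
  else if (j + 1) % 2 = d % 2 ∧ f j % 2 = e1 ∧ g j % 2 = e2 ∧
      f (j + 1) + g (j + 1) < f j + g j then -1
  else 0

/-- The Waldspurger sequence `W(f,g) = f + g + ξ` (ℤ-valued a priori). -/
def wald (f g : ℕ → ℕ) (e1 e2 d : ℕ) : ℕ → ℤ :=
  fun j => (f j : ℤ) + (g j : ℤ) + xiSeq f g e1 e2 d j

/-- Sum of squares of the transpose parts: `Σ_k ((λᵗ)_k)²` (k ranges over 1,…,λ₁). -/
noncomputable def sumSqTrans (f : ℕ → ℕ) : ℕ := ∑ k ∈ Finset.range (f 0), (ptrans f k)^2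

/-- Number of odd parts `#{j : λ_j odd}`. -/
noncomputable def oddCount (f : ℕ → ℕ) : ℕ := Nat.card {j : ℕ // Odd (f j)}

/-- `D_o(λ) = N(N−1)/2 − (Σ_k ((λᵗ)_k)² − #{odd parts})/2`, the dimension of the
nilpotent orbit of Jordan type `λ` in `so_N`. -/
noncomputable def Dorth (f : ℕ → ℕ) (N : ℕ) : ℚ :=
  (N : ℚ) * ((N : ℚ) - 1) / 2 - ((sumSqTrans f : ℚ) - (oddCount f : ℚ)) / 2

/-- `D_sp(λ) = n(2n+1) − (Σ_k ((λᵗ)_k)² + #{odd parts})/2`, the dimension of the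
nilpotent orbit of Jordan type `λ` in `sp_{2n}`. -/
noncomputable def Dsymp (f : ℕ → ℕ) (n : ℕ) : ℚ :=
  (n : ℚ) * (2 * (n : ℚ) + 1) - ((sumSqTrans f : ℚ) + (oddCount f : ℚ)) / 2


section Helpers
open Finset


lemma natCard_eq_filter_card (P : ℕ → Prop) [DecidablePred P] (N : ℕ)
    (h : ∀ j, P j → j < N) :
    Nat.card {j : ℕ // P j} = ((Finset.range N).filter P).card := by
  have hs : {j : ℕ | P j} = ↑((Finset.range N).filter P) := by
    ext j
    simp only [Set.mem_setOf_eq, coe_filter, mem_range, Set.mem_setOf_eq]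
    exact ⟨fun hp => ⟨h j hp, hp⟩, fun hp => hp.2⟩
  have h2 : Nat.card {j : ℕ // P j} = Set.ncard {j : ℕ | P j} := Nat.card_coe_set_eq _
  rw [h2, hs, Set.ncard_coe_finset]

lemma lowerset_eq_range (s : Finset ℕ) (h : ∀ j ∈ s, ∀ i, i ≤ j → i ∈ s) :
    s = Finset.range s.card := by
  have hsub : s ⊆ Finset.range s.card := by
    intro x hx
    have h1 : Finset.range (x+1) ⊆ s := by
      intro i hi
      exact h x hx i (Nat.lt_succ_iff.mp (Finset.mem_range.mp hi))
    have h2 := Finset.card_le_card h1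
    rw [Finset.card_range] at h2
    exact Finset.mem_range.mpr h2
  exact Finset.eq_of_subset_of_card_le hsub (by simp)

/-- number of parts ≥ c, among indices < N -/
def tcard (f : ℕ → ℕ) (N c : ℕ) : ℕ := ((Finset.range N).filter (fun j => c ≤ f j)).card

lemma tcard_lt_iff (f : ℕ → ℕ) (N c : ℕ) (hf : Antitone f)
    (hsupp : ∀ j, N ≤ j → f j = 0) (hc : 1 ≤ c) (j : ℕ) :
    j < tcard f N c ↔ c ≤ f j := by
  have hset : (Finset.range N).filter (fun j => c ≤ f j)
      = Finset.range (tcard f N c) := by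
    apply lowerset_eq_range
    intro a ha i hia
    simp only [mem_filter, mem_range] at ha ⊢
    exact ⟨lt_of_le_of_lt hia ha.1, le_trans ha.2 (hf hia)⟩
  constructor
  · intro hj
    have : j ∈ Finset.range (tcard f N c) := Finset.mem_range.mpr hj
    rw [← hset] at this
    exact (Finset.mem_filter.mp this).2
  · intro hj
    have hjN : j < N := by
      by_contra hh
      have := hsupp j (le_of_not_gt hh)
      omega
    have : j ∈ (Finset.range N).filter (fun j => c ≤ f j) :=
      Finset.mem_filter.mpr ⟨Finset.mem_range.mpr hjN, hj⟩
    rw [hset] at this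
    exact Finset.mem_range.mp this

lemma filter_eq_Ico (f : ℕ → ℕ) (N k : ℕ) (hf : Antitone f)
    (hsupp : ∀ j, N ≤ j → f j = 0) (hk : 1 ≤ k) :
    (Finset.range N).filter (fun j => f j = k)
      = Finset.Ico (tcard f N (k+1)) (tcard f N k) := by
  ext j
  have h1 := tcard_lt_iff f N (k+1) hf hsupp (by omega) j
  have h2 := tcard_lt_iff f N k hf hsupp hk j
  have h3 : 1 ≤ f j → j < N := by
    intro h
    by_contra hh
    have := hsupp j (le_of_not_gt hh)
    omega
  simp only [mem_filter, mem_range, Finset.mem_Ico]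
  omega

lemma ptrans_eq_tcard (f : ℕ → ℕ) (N : ℕ)
    (hsupp : ∀ j, N ≤ j → f j = 0) (c : ℕ) :
    ptrans f c = tcard f N (c+1) := by
  apply natCard_eq_filter_card
  intro j hj
  by_contra hh
  have := hsupp j (le_of_not_gt hh)
  omega

lemma pmult_ptrans (f : ℕ → ℕ) (N : ℕ) (hf : Antitone f)
    (hsupp : ∀ j, N ≤ j → f j = 0) (m : ℕ) :
    pmult (ptrans f) (m+1) = f m - f (m+1) := by
  have hb : ∀ i, ptrans f i = m + 1 → i < f 0 := by
    intro i hi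
    rw [ptrans_eq_tcard f N hsupp] at hi
    have h0 : 0 < tcard f N (i+1) := by omega
    have := (tcard_lt_iff f N (i+1) hf hsupp (by omega) 0).mp h0
    omega
  rw [pmult, natCard_eq_filter_card _ (f 0) hb]
  have : (Finset.range (f 0)).filter (fun i => ptrans f i = m + 1)
      = Finset.Ico (f (m+1)) (f m) := by
    ext i
    have h1 := tcard_lt_iff f N (i+1) hf hsupp (by omega) m
    have h2 := tcard_lt_iff f N (i+1) hf hsupp (by omega) (m+1)
    have h3 : f m ≤ f 0 := hf (Nat.zero_le m)
    have h4 : f (m+1) ≤ f m := hf (Nat.le_succ m)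
    -- h1 : m < tcard f N (i+1) ↔ i+1 ≤ f m
    -- h2 : m+1 < tcard f N (i+1) ↔ i+1 ≤ f (m+1)
    simp only [mem_filter, mem_range, Finset.mem_Ico,
      ptrans_eq_tcard f N hsupp]
    omega
  rw [this, Nat.card_Ico]

/-- parity pairing from symplecticity of the transpose -/
lemma pairing_of_symp (f : ℕ → ℕ) (N : ℕ) (hf : Antitone f)
    (hsupp : ∀ j, N ≤ j → f j = 0) (hs : IsSymplectic (ptrans f)) (i : ℕ) :
    f (2*i) % 2 = f (2*i+1) % 2 := by
  have h := hs (2*i+1) (by omega) (by exact ⟨i, by ring⟩)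
  rw [pmult_ptrans f N hf hsupp (2*i)] at h
  have h4 : f (2*i+1) ≤ f (2*i) := hf (by omega)
  rw [Nat.even_iff] at h
  omega



/-- simplified xi for the type D case (d even, e1 = e2 = 1) -/
def xi0 (f g : ℕ → ℕ) : ℕ → ℤ := fun j =>
  if j % 2 = 0 ∧ f j % 2 = 1 ∧ g j % 2 = 1 ∧ (j = 0 ∨ f j + g j < f (j - 1) + g (j - 1)) then 1
  else if j % 2 = 1 ∧ f j % 2 = 1 ∧ g j % 2 = 1 ∧ f (j + 1) + g (j + 1) < f j + g j then -1
  else 0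

lemma xi0_eq_xiSeq (f g : ℕ → ℕ) (d : ℕ) (hd : d % 2 = 0) (j : ℕ) :
    xiSeq f g 1 1 d j = xi0 f g j := by
  unfold xiSeq xi0
  split_ifs <;> omega

lemma xi0_mem (f g : ℕ → ℕ) (j : ℕ) :
    xi0 f g j = 1 ∨ xi0 f g j = 0 ∨ xi0 f g j = -1 := by
  unfold xi0; split_ifs <;> simp

lemma xi0_one_iff_zero (f g : ℕ → ℕ) :
    xi0 f g 0 = 1 ↔ (f 0 % 2 = 1 ∧ g 0 % 2 = 1) := by
  unfold xi0; split_ifs <;> constructor <;> intro h <;> first | exact h.elim | omega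

lemma xi0_one_iff_pos (f g : ℕ → ℕ) (j : ℕ) (hj : 0 < j) :
    xi0 f g j = 1 ↔ (j % 2 = 0 ∧ f j % 2 = 1 ∧ g j % 2 = 1 ∧
      f j + g j < f (j - 1) + g (j - 1)) := by
  unfold xi0; split_ifs <;> constructor <;> intro h <;> first | exact h.elim | omega

lemma xi0_neg_iff (f g : ℕ → ℕ) (j : ℕ) :
    xi0 f g j = -1 ↔ (j % 2 = 1 ∧ f j % 2 = 1 ∧ g j % 2 = 1 ∧
      f (j + 1) + g (j + 1) < f j + g j) := by
  unfold xi0; split_ifs <;> constructor <;> intro h <;> first | exact h.elim | omega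

lemma xi0_zero_of_even_f (f g : ℕ → ℕ) (j : ℕ) (h : f j % 2 = 0) :
    xi0 f g j = 0 := by
  unfold xi0; split_ifs <;> omega

lemma xi0_nonneg_even (f g : ℕ → ℕ) (j : ℕ) (h : j % 2 = 0) : 0 ≤ xi0 f g j := by
  unfold xi0; split_ifs <;> omega

lemma xi0_nonpos_odd (f g : ℕ → ℕ) (j : ℕ) (h : j % 2 = 1) : xi0 f g j ≤ 0 := by
  unfold xi0; split_ifs <;> omega

/-- the indicator of `A j` (both parts odd) -/
def Azj (f g : ℕ → ℕ) (j : ℕ) : ℤ := if f j % 2 = 1 ∧ g j % 2 = 1 then 1 else 0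

/-- indicator that xi0 is nonzero -/
def nzv (f g : ℕ → ℕ) (j : ℕ) : ℤ := if xi0 f g j = 0 then 0 else 1

def hfun (f g : ℕ → ℕ) (i : ℕ) : ℤ := Azj f g (2*i) - xi0 f g (2*i)

lemma nzv_even (f g : ℕ → ℕ) (i : ℕ) : nzv f g (2*i) = xi0 f g (2*i) := by
  have h1 := xi0_nonneg_even f g (2*i) (by omega)
  have h2 := xi0_mem f g (2*i)
  unfold nzv; split_ifs <;> omega

lemma nzv_odd (f g : ℕ → ℕ) (i : ℕ) : nzv f g (2*i+1) = -xi0 f g (2*i+1) := by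
  have h1 := xi0_nonpos_odd f g (2*i+1) (by omega)
  have h2 := xi0_mem f g (2*i+1)
  unfold nzv; split_ifs <;> omega

lemma hfun_zero (f g : ℕ → ℕ) : hfun f g 0 = 0 := by
  have h1 := xi0_one_iff_zero f g
  have h2 := xi0_mem f g 0
  have h3 := xi0_nonneg_even f g 0 (by omega)
  unfold hfun Azj
  norm_num
  split_ifs <;> omega

/-- transport lemma -/
lemma hfun_succ (f g : ℕ → ℕ) (hf : Antitone f) (hg : Antitone g)
    (hpf : f (2*i) % 2 = f (2*i+1) % 2) (hpg : g (2*i) % 2 = g (2*i+1) % 2) :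
    hfun f g (i+1) = Azj f g (2*i) + xi0 f g (2*i+1) := by
  have e1 : 2*(i+1) = 2*i+2 := by ring
  have e2 : 2*i+1+1 = 2*i+2 := by ring
  have e3 : 2*i+2-1 = 2*i+1 := by omega
  have h1 := xi0_one_iff_pos f g (2*i+2) (by omega)
  rw [e3] at h1
  have h2 := xi0_neg_iff f g (2*i+1)
  rw [e2] at h2
  have h3 := xi0_mem f g (2*i+2)
  have h4 := xi0_mem f g (2*i+1)
  have h5 := xi0_nonneg_even f g (2*i+2) (by omega)
  have h6 := xi0_nonpos_odd f g (2*i+1) (by omega)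
  have ha1 : f (2*i+2) ≤ f (2*i+1) := hf (by omega)
  have ha2 : g (2*i+2) ≤ g (2*i+1) := hg (by omega)
  unfold hfun Azj
  rw [e1]
  split_ifs <;> omega

lemma sumPairs {M : Type*} [AddCommMonoid M] (u : ℕ → M) (T : ℕ) :
    ∑ j ∈ Finset.range (2*T), u j = ∑ i ∈ Finset.range T, (u (2*i) + u (2*i+1)) := by
  induction T with
  | zero => simp
  | succ t ih =>
      have h2 : 2*(t+1) = (2*t+1)+1 := by ring
      rw [h2, Finset.sum_range_succ, Finset.sum_range_succ, Finset.sum_range_succ, ih]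
      rw [add_assoc]

lemma azj_pair (f g : ℕ → ℕ) (i : ℕ)
    (hpf : f (2*i) % 2 = f (2*i+1) % 2) (hpg : g (2*i) % 2 = g (2*i+1) % 2) :
    Azj f g (2*i+1) = Azj f g (2*i) := by
  unfold Azj; split_ifs <;> omega

lemma azj_top (f g : ℕ → ℕ) (j : ℕ) (h : f j = 0) : Azj f g j = 0 := by
  unfold Azj; split_ifs <;> omega

lemma hfun_top (f g : ℕ → ℕ) (T : ℕ) (h : f (2*T) = 0) : hfun f g T = 0 := by
  unfold hfun
  rw [azj_top f g _ h, xi0_zero_of_even_f f g _ (by omega)]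
  ring

lemma sum_xi0 (f g : ℕ → ℕ) (hf : Antitone f) (hg : Antitone g)
    (hpf : ∀ i, f (2*i) % 2 = f (2*i+1) % 2) (hpg : ∀ i, g (2*i) % 2 = g (2*i+1) % 2)
    (T : ℕ) (hT : f (2*T) = 0) :
    ∑ j ∈ Finset.range (2*T), xi0 f g j = 0 := by
  rw [sumPairs]
  have he : ∀ i ∈ Finset.range T, xi0 f g (2*i) + xi0 f g (2*i+1)
      = hfun f g (i+1) - hfun f g i := by
    intro i _
    have h2 := hfun_succ f g hf hg (hpf i) (hpg i)
    unfold hfun at *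
    omega
  rw [Finset.sum_congr rfl he, Finset.sum_range_sub (hfun f g) T,
    hfun_top f g T hT, hfun_zero]
  ring

lemma sum_xi0_weighted (f g : ℕ → ℕ) (hf : Antitone f) (hg : Antitone g)
    (hpf : ∀ i, f (2*i) % 2 = f (2*i+1) % 2) (hpg : ∀ i, g (2*i) % 2 = g (2*i+1) % 2)
    (T : ℕ) (hT : f (2*T) = 0) :
    ∑ j ∈ Finset.range (2*T), (((2*j+1 : ℕ) : ℤ) * xi0 f g j - nzv f g j + 2 * Azj f g j)
      = 0 := by
  rw [sumPairs]
  have he : ∀ i ∈ Finset.range T,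
      ((((2*(2*i)+1 : ℕ) : ℤ) * xi0 f g (2*i) - nzv f g (2*i) + 2 * Azj f g (2*i))
        + (((2*(2*i+1)+1 : ℕ) : ℤ) * xi0 f g (2*i+1) - nzv f g (2*i+1) + 2 * Azj f g (2*i+1)))
      = 4 * ((((i+1:ℕ)):ℤ) * hfun f g (i+1) - ((i:ℕ):ℤ) * hfun f g i) := by
    intro i _
    have e2 : xi0 f g (2*i+1) = hfun f g (i+1) - Azj f g (2*i) := by
      have := hfun_succ f g hf hg (hpf i) (hpg i); omega
    have e1 : xi0 f g (2*i) = Azj f g (2*i) - hfun f g i := by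
      unfold hfun; ring
    rw [nzv_even, nzv_odd, azj_pair f g i (hpf i) (hpg i), e1, e2]
    push_cast
    ring
  rw [Finset.sum_congr rfl he, ← Finset.mul_sum]
  have := Finset.sum_range_sub (fun i => ((i:ℕ):ℤ) * hfun f g i) T
  simp only [this]
  rw [hfun_top f g T hT]
  simp

lemma sumPairsEq (u : ℕ → ℕ) (t : ℕ) (hu : ∀ i, u (2*i) = u (2*i+1)) :
    ∑ j ∈ Finset.range (2*t), u j = 2 * ∑ i ∈ Finset.range t, u (2*i) := by
  rw [sumPairs]
  rw [Finset.sum_congr rfl (fun i _ => by rw [← hu i]; ring : ∀ i ∈ Finset.range t,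
    u (2*i) + u (2*i+1) = 2 * u (2*i)), ← Finset.mul_sum]

lemma card_odd_filter (f : ℕ → ℕ) (hp : ∀ i, f (2*i) % 2 = f (2*i+1) % 2)
    (m : ℕ) (hm : m % 2 = 1 → f (m-1) % 2 = 0) :
    ((Finset.range m).filter (fun j => f j % 2 = 1)).card % 2 = 0 := by
  have key : ∀ t, ((Finset.range (2*t)).filter (fun j => f j % 2 = 1)).card % 2 = 0 := by
    intro t
    rw [Finset.card_filter]
    rw [sumPairsEq _ t (fun i => by simp only [hp i])]
    omega
  rcases Nat.even_or_odd m with ⟨t, ht⟩ | ⟨t, ht⟩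
  · have : m = 2*t := by omega
    subst this; exact key t
  · have hm2 : m = 2*t+1 := by omega
    subst hm2
    have h0 : f (2*t) % 2 = 0 := by have := hm (by omega); simpa using this
    have : (2*t+1) = (2*t) + 1 := rfl
    rw [Finset.range_add_one, Finset.filter_insert]
    rw [if_neg (by omega)]
    exact key t

lemma le_support_bound (f : ℕ → ℕ) (N : ℕ) (hf : Antitone f)
    (hsupp : ∀ j, N ≤ j → f j = 0) (m : ℕ) (hrun : ∀ j, j < m → f m < f j) :
    m ≤ N := by
  by_contra hh
  have h1 := hrun N (by omega)
  have := hsupp N (le_refl N)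
  omega

lemma card_even_filter (f : ℕ → ℕ) (N : ℕ) (hf : Antitone f)
    (hsupp : ∀ j, N ≤ j → f j = 0)
    (hof : ∀ k, 0 < k → k % 2 = 0 → ((Finset.range N).filter (fun j => f j = k)).card % 2 = 0)
    (m : ℕ) (hrun : ∀ j, j < m → f m < f j) :
    ((Finset.range m).filter (fun j => f j % 2 = 0)).card % 2 = 0 := by
  have hmN : m ≤ N := le_support_bound f N hf hsupp m hrun
  have hfib := Finset.card_eq_sum_card_fiberwise
    (s := (Finset.range m).filter (fun j => f j % 2 = 0))
    (t := Finset.Ioc (f m) (f 0)) (f := f)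
    (by
      intro j hj
      simp only [Finset.mem_coe, Finset.mem_filter, Finset.mem_range] at hj
      rw [Finset.mem_coe, Finset.mem_Ioc]
      exact ⟨hrun j hj.1, hf (Nat.zero_le j)⟩)
  rw [hfib]
  have hterm : ∀ v ∈ Finset.Ioc (f m) (f 0),
      (((Finset.range m).filter (fun j => f j % 2 = 0)).filter (fun j => f j = v)).card % 2
        = 0 := by
    intro v hv
    rw [Finset.mem_Ioc] at hv
    rcases Nat.even_or_odd v with hev | hodd
    · have : ((Finset.range m).filter (fun j => f j % 2 = 0)).filter (fun j => f j = v)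
          = (Finset.range N).filter (fun j => f j = v) := by
        ext j
        simp only [Finset.mem_filter, Finset.mem_range]
        constructor
        · rintro ⟨⟨hj, _⟩, hfj⟩
          exact ⟨lt_of_lt_of_le hj hmN, hfj⟩
        · rintro ⟨hj, hfj⟩
          have hjm : j < m := by
            by_contra hh
            have := hf (le_of_not_gt hh)
            omega
          have : v % 2 = 0 := Nat.even_iff.mp hev
          exact ⟨⟨hjm, by omega⟩, hfj⟩
      rw [this]
      exact hof v (by omega) (Nat.even_iff.mp hev)
    · have : ((Finset.range m).filter (fun j => f j % 2 = 0)).filter (fun j => f j = v)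
          = ∅ := by
        rw [Finset.filter_eq_empty_iff]
        intro j hj
        simp only [Finset.mem_filter] at hj
        rw [Nat.odd_iff] at hodd
        omega
      rw [this]
      simp
  have : 2 ∣ ∑ v ∈ Finset.Ioc (f m) (f 0),
      (((Finset.range m).filter (fun j => f j % 2 = 0)).filter (fun j => f j = v)).card :=
    Finset.dvd_sum (fun v hv => by have := hterm v hv; omega)
  omega

/-- If `m` is a run start (all earlier parts strictly bigger) and `f m` is even,
then `m` is even.  Uses orthogonality and the parity pairing. -/
lemma runstart_even (f : ℕ → ℕ) (N : ℕ) (hf : Antitone f)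
    (hsupp : ∀ j, N ≤ j → f j = 0)
    (hp : ∀ i, f (2*i) % 2 = f (2*i+1) % 2)
    (hof : ∀ k, 0 < k → k % 2 = 0 → ((Finset.range N).filter (fun j => f j = k)).card % 2 = 0)
    (m : ℕ) (hrun : ∀ j, j < m → f m < f j) (hev : f m % 2 = 0) :
    m % 2 = 0 := by
  have h1 := Finset.card_filter_add_card_filter_not
    (s := Finset.range m) (p := fun j => f j % 2 = 0)
  have h2 : (Finset.range m).filter (fun j => ¬ (f j % 2 = 0))
      = (Finset.range m).filter (fun j => f j % 2 = 1) := by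
    apply Finset.filter_congr
    intro j _
    omega
  have h3 := card_even_filter f N hf hsupp hof m hrun
  have h4 : ((Finset.range m).filter (fun j => f j % 2 = 1)).card % 2 = 0 := by
    apply card_odd_filter f hp
    intro hm1
    have hm0 : 0 < m := by omega
    have : m - 1 = 2 * ((m-1)/2) := by omega
    rw [this]
    have := hp ((m-1)/2)
    have he : 2 * ((m-1)/2) + 1 = m := by omega
    rw [he] at this
    omega
  rw [h2, Finset.card_range] at h1
  omega

lemma xi0_ne_zero_odd (f g : ℕ → ℕ) (j : ℕ) (h : xi0 f g j ≠ 0) :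
    f j % 2 = 1 ∧ g j % 2 = 1 := by
  revert h; unfold xi0; split_ifs <;> intro h <;> first | omega | exact absurd rfl h

set_option maxHeartbeats 3200000 in
lemma mult_w_even (f g : ℕ → ℕ) (N : ℕ)
    (hf : Antitone f) (hg : Antitone g)
    (hfN : ∀ j, N ≤ j → f j = 0) (hgN : ∀ j, N ≤ j → g j = 0)
    (hpf : ∀ i, f (2*i) % 2 = f (2*i+1) % 2) (hpg : ∀ i, g (2*i) % 2 = g (2*i+1) % 2)
    (hof : ∀ k, 0 < k → k % 2 = 0 → ((Finset.range N).filter (fun j => f j = k)).card % 2 = 0)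
    (hog : ∀ k, 0 < k → k % 2 = 0 → ((Finset.range N).filter (fun j => g j = k)).card % 2 = 0)
    (w : ℕ → ℕ) (hw : ∀ j, (w j : ℤ) = (f j : ℤ) + (g j : ℤ) + xi0 f g j)
    (k : ℕ) (hk : 0 < k) (hke : k % 2 = 0) :
    ((Finset.range N).filter (fun j => w j = k)).card % 2 = 0 := by
  have hmu : Antitone (fun j => f j + g j) := fun i j hij => Nat.add_le_add (hf hij) (hg hij)
  have hmuN : ∀ j, N ≤ j → f j + g j = 0 := fun j hj => by rw [hfN j hj, hgN j hj]
  set a := tcard (fun j => f j + g j) N (k+1) with hadef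
  set b := tcard (fun j => f j + g j) N k with hbdef
  have hiffa : ∀ j, j < a ↔ k + 1 ≤ f j + g j := fun j =>
    tcard_lt_iff (fun j => f j + g j) N (k+1) hmu hmuN (by omega) j
  have hiffb : ∀ j, j < b ↔ k ≤ f j + g j := fun j =>
    tcard_lt_iff (fun j => f j + g j) N k hmu hmuN (by omega) j
  have hab : a ≤ b := by
    by_contra hh
    have h1 := hiffa b
    have h2 := hiffb b
    omega
  have hbN : b ≤ N := by
    have := Finset.card_filter_le (Finset.range N) (fun j => k ≤ f j + g j)
    rw [Finset.card_range] at this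
    exact this
  -- step 1 : the relevant parts of w
  have hstep1 : (Finset.range N).filter (fun j => w j = k)
      = (Finset.Ico a b).filter (fun j => xi0 f g j = 0) := by
    ext j
    have hwj := hw j
    have h1 := hiffa j
    have h2 := hiffb j
    have h3 := xi0_mem f g j
    have h4 : xi0 f g j ≠ 0 → f j % 2 = 1 ∧ g j % 2 = 1 := xi0_ne_zero_odd f g j
    simp only [Finset.mem_filter, Finset.mem_range, Finset.mem_Ico]
    omega
  rw [hstep1]
  rcases le_or_gt b a with hba | hlt
  · have : Finset.Ico a b = ∅ := Finset.Ico_eq_empty (by omega)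
    rw [this]
    simp
  -- now a < b, the run is nonempty
  have hmua : f a + g a = k := by
    have h1 := hiffa a
    have h2 := hiffb a
    omega
  have hconst : ∀ j, a ≤ j → j < b → f j = f a ∧ g j = g a := by
    intro j hj1 hj2
    have h1 := hiffa j
    have h2 := hiffb j
    have h3 : f j ≤ f a := hf hj1
    have h4 : g j ≤ g a := hg hj1
    omega
  by_cases hA : f a % 2 = 1
  · -- all parts odd on the run
    have hga : g a % 2 = 1 := by omega
    set a' := if a % 2 = 0 then a + 1 else a with ha'def
    set b' := if (b-1) % 2 = 1 then b - 1 else b with hb'def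
    have hrun_char : ∀ j, a ≤ j → j < b →
        (xi0 f g j = 0 ↔ ¬(j = a ∧ j % 2 = 0) ∧ ¬(j = b - 1 ∧ j % 2 = 1)) := by
      intro j hj1 hj2
      obtain ⟨hfj, hgj⟩ := hconst j hj1 hj2
      have h3 := xi0_mem f g j
      by_cases hpar : j % 2 = 0
      · have hxn := xi0_neg_iff f g j
        by_cases hja : j = a
        · rcases Nat.eq_zero_or_pos j with h0 | hpos
          · subst h0
            have hx1 := xi0_one_iff_zero f g
            omega
          · have hx1 := xi0_one_iff_pos f g j hpos
            have hm1 := hiffa (j-1)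
            omega
        · have hx1 := xi0_one_iff_pos f g j (by omega)
          have := hconst (j-1) (by omega) (by omega)
          omega
      · have hx1 := xi0_one_iff_pos f g j (by omega)
        have hxn := xi0_neg_iff f g j
        by_cases hjb : j = b - 1
        · have := hiffb (j+1)
          omega
        · have := hconst (j+1) (by omega) (by omega)
          omega
    have ha' : (a % 2 = 0 ∧ a' = a + 1) ∨ (a % 2 = 1 ∧ a' = a) := by
      rw [ha'def]; split_ifs <;> omega
    have hb' : ((b-1) % 2 = 1 ∧ b' = b - 1) ∨ ((b-1) % 2 = 0 ∧ b' = b) := by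
      rw [hb'def]; split_ifs <;> omega
    have hstep2 : (Finset.Ico a b).filter (fun j => xi0 f g j = 0) = Finset.Ico a' b' := by
      ext j
      simp only [Finset.mem_filter, Finset.mem_Ico]
      constructor
      · rintro ⟨⟨h1, h2⟩, hx⟩
        have := (hrun_char j h1 h2).mp hx
        omega
      · intro hm
        have hj1 : a ≤ j ∧ j < b := by omega
        have := (hrun_char j hj1.1 hj1.2).mpr (by omega)
        omega
    rw [hstep2, Nat.card_Ico]
    omega
  · -- all parts even on the run
    have hga : g a % 2 = 0 := by omega
    have hstep2 : (Finset.Ico a b).filter (fun j => xi0 f g j = 0) = Finset.Ico a b := by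
      apply Finset.filter_true_of_mem
      intro j hj
      rw [Finset.mem_Ico] at hj
      have := hconst j hj.1 hj.2
      exact xi0_zero_of_even_f f g j (by omega)
    rw [hstep2, Nat.card_Ico]
    have haev : a % 2 = 0 := by
      rcases Nat.eq_zero_or_pos a with h0 | hpos
      · omega
      · have hm1 : f (a-1) + g (a-1) ≥ k + 1 := by
          have := hiffa (a-1)
          omega
        have hf1 : f a ≤ f (a-1) := hf (by omega)
        have hg1 : g a ≤ g (a-1) := hg (by omega)
        rcases (by omega : f a < f (a-1) ∨ g a < g (a-1)) with hd | hd
        · exact runstart_even f N hf hfN hpf hof a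
            (fun j hj => lt_of_lt_of_le hd (hf (by omega))) (by omega)
        · exact runstart_even g N hg hgN hpg hog a
            (fun j hj => lt_of_lt_of_le hd (hg (by omega))) (by omega)
    have hbev : b % 2 = 0 := by
      by_contra hh
      have hb1 : b - 1 < b := by omega
      have hmem : a ≤ b - 1 := by omega
      have hcb := hconst (b-1) hmem (by omega)
      have hmub : f b + g b < k := by
        have := hiffb b
        omega
      have hmub1 : f (b-1) + g (b-1) = k := by
        have h1 := hiffa (b-1)
        have h2 := hiffb (b-1)
        omega
      have hpair_f : f (b-1) % 2 = f b % 2 := by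
        have he : b - 1 = 2 * ((b-1)/2) := by omega
        have := hpf ((b-1)/2)
        have he2 : 2 * ((b-1)/2) + 1 = b := by omega
        rw [he2] at this
        rw [he]
        exact this
      have hpair_g : g (b-1) % 2 = g b % 2 := by
        have he : b - 1 = 2 * ((b-1)/2) := by omega
        have := hpg ((b-1)/2)
        have he2 : 2 * ((b-1)/2) + 1 = b := by omega
        rw [he2] at this
        rw [he]
        exact this
      have hf1 : f b ≤ f (b-1) := hf (by omega)
      have hg1 : g b ≤ g (b-1) := hg (by omega)
      rcases (by omega : f b < f (b-1) ∨ g b < g (b-1)) with hd | hd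
      · have := runstart_even f N hf hfN hpf hof b
          (fun j hj => lt_of_lt_of_le hd (hf (by omega))) (by omega)
        omega
      · have := runstart_even g N hg hgN hpg hog b
          (fun j hj => lt_of_lt_of_le hd (hg (by omega))) (by omega)
        omega
    omega

lemma maxsum (u : ℕ → ℕ) (N : ℕ) :
    ∑ j ∈ Finset.range N, ∑ j' ∈ Finset.range N, u (max j j')
      = ∑ j ∈ Finset.range N, (2*j+1) * u j := by
  induction N with
  | zero => simp
  | succ n ih =>
      rw [Finset.sum_range_succ, Finset.sum_range_succ]
      have h1 : ∀ j ∈ Finset.range n, ∑ j' ∈ Finset.range (n+1), u (max j j')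
          = (∑ j' ∈ Finset.range n, u (max j j')) + u n := by
        intro j hj
        rw [Finset.sum_range_succ, max_eq_right (le_of_lt (Finset.mem_range.mp hj))]
      rw [Finset.sum_congr rfl h1, Finset.sum_add_distrib, ih]
      have h2 : ∑ x ∈ Finset.range n, u (max n x) = ∑ _x ∈ Finset.range n, u n := by
        apply Finset.sum_congr rfl
        intro j' hj'
        rw [max_eq_left (le_of_lt (Finset.mem_range.mp hj'))]
      rw [h2, max_self, Finset.sum_range_succ]
      simp only [Finset.sum_const, Finset.card_range, smul_eq_mul]
      ring

lemma sumSqTrans_eq (f : ℕ → ℕ) (N : ℕ) (hf : Antitone f)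
    (hsupp : ∀ j, N ≤ j → f j = 0) :
    sumSqTrans f = ∑ j ∈ Finset.range N, (2*j+1) * f j := by
  have e1 : sumSqTrans f = ∑ k ∈ Finset.range (f 0), (tcard f N (k+1))^2 := by
    unfold sumSqTrans
    apply Finset.sum_congr rfl
    intro k _
    rw [ptrans_eq_tcard f N hsupp]
  rw [e1]
  have e2 : ∀ k ∈ Finset.range (f 0), (tcard f N (k+1))^2
      = ∑ j ∈ Finset.range N, ∑ j' ∈ Finset.range N,
          (if k+1 ≤ f (max j j') then 1 else 0) := by
    intro k _
    rw [tcard, Finset.card_filter, pow_two, Finset.sum_mul_sum]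
    apply Finset.sum_congr rfl
    intro j _
    apply Finset.sum_congr rfl
    intro j' _
    rcases le_total j j' with h | h
    · rw [max_eq_right h]
      have := hf h
      split_ifs <;> omega
    · rw [max_eq_left h]
      have := hf h
      split_ifs <;> omega
  rw [Finset.sum_congr rfl e2]
  rw [Finset.sum_comm]
  have e3 : ∀ j ∈ Finset.range N,
      ∑ k ∈ Finset.range (f 0), ∑ j' ∈ Finset.range N,
          (if k+1 ≤ f (max j j') then 1 else 0)
      = ∑ j' ∈ Finset.range N, f (max j j') := by
    intro j _
    rw [Finset.sum_comm]
    apply Finset.sum_congr rfl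
    intro j' _
    have hle : f (max j j') ≤ f 0 := hf (Nat.zero_le _)
    have : (Finset.range (f 0)).filter (fun k => k+1 ≤ f (max j j'))
        = Finset.range (f (max j j')) := by
      ext k
      simp only [Finset.mem_filter, Finset.mem_range]
      omega
    rw [← Finset.card_filter, this, Finset.card_range]
  rw [Finset.sum_congr rfl e3, maxsum]

lemma oddfilter_eq_summod (h : ℕ → ℕ) (N : ℕ) :
    ((Finset.range N).filter (fun j => Odd (h j))).card = ∑ j ∈ Finset.range N, h j % 2 := by
  rw [Finset.card_filter]
  apply Finset.sum_congr rfl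
  intro j _
  split_ifs with hj
  · rw [Nat.odd_iff] at hj; omega
  · rw [Nat.odd_iff] at hj; omega

lemma sum_range_extend (h : ℕ → ℕ) (N M : ℕ) (hNM : N ≤ M)
    (hsupp : ∀ j, N ≤ j → h j = 0) :
    ∑ j ∈ Finset.range M, h j = ∑ j ∈ Finset.range N, h j := by
  symm
  apply Finset.sum_subset (Finset.range_subset_range.mpr hNM)
  intro x _ hx
  exact hsupp x (by simpa using hx)

end Helpers

set_option maxHeartbeats 4000000 in
/-- type D dimension.  `d₁ = 2n₁`, `d₂ = 2n₂`, `d = 2n = d₁+d₂`,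
`λ₁, λ₂` special orthogonal of `d₁, d₂`.  Then `W = W(λ₁,λ₂)` (ε₁=ε₂=1) is an
orthogonal partition of `d` and
`D_o(W) = D_o(λ₁) + D_o(λ₂) + n(2n−1) − n₁(2n₁−1) − n₂(2n₂−1)`. -/
theorem stmt5 (n1 n2 : ℕ) (lam1 lam2 : ℕ → ℕ)
    (h1 : IsPartitionOf lam1 (2*n1)) (h1o : IsOrthogonal lam1)
    (h1s : IsSymplectic (ptrans lam1))
    (h2 : IsPartitionOf lam2 (2*n2)) (h2o : IsOrthogonal lam2)
    (h2s : IsSymplectic (ptrans lam2)) :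
    ∃ w : ℕ → ℕ, (∀ j, (w j : ℤ) = wald lam1 lam2 1 1 (2*n1+2*n2) j) ∧
      IsPartitionOf w (2*n1+2*n2) ∧ IsOrthogonal w ∧
      Dorth w (2*n1+2*n2)
        = Dorth lam1 (2*n1) + Dorth lam2 (2*n2)
          + (((n1+n2 : ℕ) : ℚ) * (2 * ((n1+n2 : ℕ) : ℚ) - 1)
             - (n1 : ℚ) * (2 * (n1 : ℚ) - 1)
             - (n2 : ℚ) * (2 * (n2 : ℚ) - 1)) := by
  obtain ⟨hf, N1, hN1, hsum1⟩ := h1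
  obtain ⟨hg, N2, hN2, hsum2⟩ := h2
  set N := 2*(N1+N2+1) with hNdef
  have hfN : ∀ j, N ≤ j → lam1 j = 0 := fun j hj => hN1 j (by omega)
  have hgN : ∀ j, N ≤ j → lam2 j = 0 := fun j hj => hN2 j (by omega)
  have hpf : ∀ i, lam1 (2*i) % 2 = lam1 (2*i+1) % 2 :=
    pairing_of_symp lam1 N1 hf hN1 h1s
  have hpg : ∀ i, lam2 (2*i) % 2 = lam2 (2*i+1) % 2 :=
    pairing_of_symp lam2 N2 hg hN2 h2s
  have hbf : ∀ k, 0 < k → ∀ j, lam1 j = k → j < N := by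
    intro k hk j hjk
    by_contra hh
    have := hfN j (le_of_not_gt hh)
    omega
  have hbg : ∀ k, 0 < k → ∀ j, lam2 j = k → j < N := by
    intro k hk j hjk
    by_contra hh
    have := hgN j (le_of_not_gt hh)
    omega
  have hof : ∀ k, 0 < k → k % 2 = 0 →
      ((Finset.range N).filter (fun j => lam1 j = k)).card % 2 = 0 := by
    intro k hk hke
    have h := h1o k hk (Nat.even_iff.mpr hke)
    rw [pmult, natCard_eq_filter_card _ N (hbf k hk)] at h
    exact Nat.even_iff.mp h
  have hog : ∀ k, 0 < k → k % 2 = 0 →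
      ((Finset.range N).filter (fun j => lam2 j = k)).card % 2 = 0 := by
    intro k hk hke
    have h := h2o k hk (Nat.even_iff.mpr hke)
    rw [pmult, natCard_eq_filter_card _ N (hbg k hk)] at h
    exact Nat.even_iff.mp h
  have hxi : ∀ j, xiSeq lam1 lam2 1 1 (2*n1+2*n2) j = xi0 lam1 lam2 j :=
    xi0_eq_xiSeq lam1 lam2 (2*n1+2*n2) (by omega)
  have hnn : ∀ j, 0 ≤ wald lam1 lam2 1 1 (2*n1+2*n2) j := by
    intro j
    unfold wald
    rw [hxi j]
    have h3 := xi0_mem lam1 lam2 j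
    have h4 := xi0_ne_zero_odd lam1 lam2 j
    omega
  set w : ℕ → ℕ := fun j => (wald lam1 lam2 1 1 (2*n1+2*n2) j).toNat with hwdef
  have hw : ∀ j, (w j : ℤ) = wald lam1 lam2 1 1 (2*n1+2*n2) j :=
    fun j => Int.toNat_of_nonneg (hnn j)
  have hwx : ∀ j, (w j : ℤ) = (lam1 j : ℤ) + (lam2 j : ℤ) + xi0 lam1 lam2 j := by
    intro j
    rw [hw j]
    unfold wald
    rw [hxi j]
  have hwanti : Antitone w := by
    apply antitone_nat_of_succ_le
    intro j
    have hz : (w (j+1) : ℤ) ≤ (w j : ℤ) := by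
      rw [hwx, hwx]
      have h1 := xi0_one_iff_pos lam1 lam2 (j+1) (by omega)
      simp only [Nat.add_sub_cancel] at h1
      have hneg := xi0_neg_iff lam1 lam2 j
      have hm0 := xi0_mem lam1 lam2 j
      have hm1 := xi0_mem lam1 lam2 (j+1)
      have ha1 : lam1 (j+1) ≤ lam1 j := hf (Nat.le_succ j)
      have ha2 : lam2 (j+1) ≤ lam2 j := hg (Nat.le_succ j)
      have hnodd := xi0_ne_zero_odd lam1 lam2 j
      have hnodd1 := xi0_ne_zero_odd lam1 lam2 (j+1)
      omega
    exact_mod_cast hz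
  have hwN : ∀ j, N ≤ j → w j = 0 := by
    intro j hj
    have hz : (w j : ℤ) = 0 := by
      rw [hwx j, hfN j hj, hgN j hj, xi0_zero_of_even_f lam1 lam2 j (by rw [hfN j hj])]
      simp
    exact_mod_cast hz
  have hsumxi : ∑ j ∈ Finset.range N, xi0 lam1 lam2 j = 0 := by
    have h := sum_xi0 lam1 lam2 hf hg hpf hpg (N1+N2+1) (hfN _ (by omega))
    rw [← hNdef] at h
    exact h
  have he1 : ∑ j ∈ Finset.range N, (lam1 j : ℤ) = 2*(n1:ℤ) := by
    have : ∑ j ∈ Finset.range N, lam1 j = 2*n1 := by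
      rw [sum_range_extend lam1 N1 N (by omega) hN1]
      exact hsum1
    exact_mod_cast congrArg (Nat.cast : ℕ → ℤ) this
  have he2 : ∑ j ∈ Finset.range N, (lam2 j : ℤ) = 2*(n2:ℤ) := by
    have : ∑ j ∈ Finset.range N, lam2 j = 2*n2 := by
      rw [sum_range_extend lam2 N2 N (by omega) hN2]
      exact hsum2
    exact_mod_cast congrArg (Nat.cast : ℕ → ℤ) this
  have hsumw : ∑ j ∈ Finset.range N, w j = 2*n1+2*n2 := by
    have hz : (↑(∑ j ∈ Finset.range N, w j) : ℤ) = ↑(2*n1+2*n2) := by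
      push_cast
      rw [Finset.sum_congr rfl (fun j _ => hwx j), Finset.sum_add_distrib,
        Finset.sum_add_distrib, hsumxi, he1, he2]
      ring
    exact_mod_cast hz
  refine ⟨w, hw, ⟨hwanti, N, hwN, hsumw⟩, ?_, ?_⟩
  · -- orthogonality
    intro k hk hke
    rw [pmult, natCard_eq_filter_card _ N (fun j hj => by
      by_contra hh
      have := hwN j (le_of_not_gt hh)
      omega), Nat.even_iff]
    exact mult_w_even lam1 lam2 N hf hg hfN hgN hpf hpg hof hog w hwx k hk
      (Nat.even_iff.mp hke)
  · -- the dimension formula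
    have hSw : (sumSqTrans w : ℤ) = ∑ j ∈ Finset.range N, ((2*j+1 : ℕ) : ℤ) * (w j : ℤ) := by
      rw [sumSqTrans_eq w N hwanti hwN, Nat.cast_sum]
      apply Finset.sum_congr rfl
      intro j _
      push_cast
      ring
    have hSf : (sumSqTrans lam1 : ℤ) = ∑ j ∈ Finset.range N, ((2*j+1 : ℕ) : ℤ) * (lam1 j : ℤ) := by
      rw [sumSqTrans_eq lam1 N hf hfN, Nat.cast_sum]
      apply Finset.sum_congr rfl
      intro j _
      push_cast
      ring
    have hSg : (sumSqTrans lam2 : ℤ) = ∑ j ∈ Finset.range N, ((2*j+1 : ℕ) : ℤ) * (lam2 j : ℤ) := by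
      rw [sumSqTrans_eq lam2 N hg hgN, Nat.cast_sum]
      apply Finset.sum_congr rfl
      intro j _
      push_cast
      ring
    have hOw : (oddCount w : ℤ) = ∑ j ∈ Finset.range N, ((w j % 2 : ℕ) : ℤ) := by
      rw [oddCount, natCard_eq_filter_card _ N (fun j hj => by
        by_contra hh
        have h0 := hwN j (le_of_not_gt hh)
        rw [h0] at hj
        exact (Nat.not_odd_zero) hj), oddfilter_eq_summod, Nat.cast_sum]
    have hOf : (oddCount lam1 : ℤ) = ∑ j ∈ Finset.range N, ((lam1 j % 2 : ℕ) : ℤ) := by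
      rw [oddCount, natCard_eq_filter_card _ N (fun j hj => by
        by_contra hh
        have h0 := hfN j (le_of_not_gt hh)
        rw [h0] at hj
        exact (Nat.not_odd_zero) hj), oddfilter_eq_summod, Nat.cast_sum]
    have hOg : (oddCount lam2 : ℤ) = ∑ j ∈ Finset.range N, ((lam2 j % 2 : ℕ) : ℤ) := by
      rw [oddCount, natCard_eq_filter_card _ N (fun j hj => by
        by_contra hh
        have h0 := hgN j (le_of_not_gt hh)
        rw [h0] at hj
        exact (Nat.not_odd_zero) hj), oddfilter_eq_summod, Nat.cast_sum]
    have hpar : ∀ j ∈ Finset.range N, ((w j % 2 : ℕ) : ℤ)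
        = ((lam1 j % 2 : ℕ) : ℤ) + ((lam2 j % 2 : ℕ) : ℤ)
          - 2 * Azj lam1 lam2 j + nzv lam1 lam2 j := by
      intro j _
      have e := hwx j
      have h3 := xi0_mem lam1 lam2 j
      have h4 := xi0_ne_zero_odd lam1 lam2 j
      have hAz : (lam1 j % 2 = 1 ∧ lam2 j % 2 = 1 ∧ Azj lam1 lam2 j = 1)
          ∨ (¬(lam1 j % 2 = 1 ∧ lam2 j % 2 = 1) ∧ Azj lam1 lam2 j = 0) := by
        unfold Azj
        split_ifs with h <;> tauto
      have hnz : (xi0 lam1 lam2 j = 0 ∧ nzv lam1 lam2 j = 0)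
          ∨ (xi0 lam1 lam2 j ≠ 0 ∧ nzv lam1 lam2 j = 1) := by
        unfold nzv
        split_ifs with h <;> tauto
      omega
    have hwt : ∀ j ∈ Finset.range N, ((2*j+1 : ℕ) : ℤ) * (w j : ℤ)
        = ((2*j+1 : ℕ) : ℤ) * (lam1 j : ℤ) + ((2*j+1 : ℕ) : ℤ) * (lam2 j : ℤ)
          + ((2*j+1 : ℕ) : ℤ) * xi0 lam1 lam2 j := by
      intro j _
      rw [hwx j]
      ring
    have hXw : ∑ j ∈ Finset.range N,
        (((2*j+1 : ℕ) : ℤ) * xi0 lam1 lam2 j - nzv lam1 lam2 j + 2 * Azj lam1 lam2 j) = 0 := by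
      have h := sum_xi0_weighted lam1 lam2 hf hg hpf hpg (N1+N2+1) (hfN _ (by omega))
      rw [← hNdef] at h
      exact h
    have KEY : (sumSqTrans w : ℤ) - (oddCount w : ℤ)
        = ((sumSqTrans lam1 : ℤ) - (oddCount lam1 : ℤ))
          + ((sumSqTrans lam2 : ℤ) - (oddCount lam2 : ℤ)) := by
      rw [hSw, hOw, hSf, hOf, hSg, hOg,
        Finset.sum_congr rfl hpar, Finset.sum_congr rfl hwt]
      simp only [Finset.sum_add_distrib, Finset.sum_sub_distrib] at hXw ⊢
      linarith
    have KEYQ : ((sumSqTrans w : ℚ) - (oddCount w : ℚ))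
        = ((sumSqTrans lam1 : ℚ) - (oddCount lam1 : ℚ))
          + ((sumSqTrans lam2 : ℚ) - (oddCount lam2 : ℚ)) := by
      exact_mod_cast KEY
    unfold Dorth
    push_cast
    linear_combination (-(1:ℚ)/2) * KEYQ
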